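/- The map ℂ → ℂˣ ⊗_ℤ ℚ sending a complex number s to exp(s) ⊗ 1 is a homomorphism from the additive group of ℂ to the ℚ-vector space ℂˣ ⊗_ℤ ℚ; it is surjective, and its kernel is exactly 2πi·ℚ = {2πi·q : q ∈ ℚ}. Consequently it induces an isomorphism of abelian groups ℂ/(2πi)ℚ ≅ ℂˣ ⊗_ℤ ℚ. -/

import Mathlib

open scoped TensorProduct

/-- The subgroup `2πi·ℚ ⊆ ℂ`, i.e. the range of `q ↦ 2πi·q`. -/
noncomputable def twoPiIQ : AddSubgroup ℂ :=
  (AddMonoidHom.mk' (fun q : ℚ => (2 * Real.pi * Complex.I) * (q : ℂ))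
    (by intro a b; push_cast; ring)).range

/-- The map `ℂ → ℂˣ ⊗_ℤ ℚ`, `s ↦ exp s ⊗ 1` (with `ℂˣ` written additively). -/
noncomputable def expTensor (s : ℂ) : (Additive ℂˣ) ⊗[ℤ] ℚ :=
  (Additive.ofMul (Units.mk0 (Complex.exp s) (Complex.exp_ne_zero s))) ⊗ₜ[ℤ] (1 : ℚ)

noncomputable def expUnit (s : ℂ) : ℂˣ := Units.mk0 (Complex.exp s) (Complex.exp_ne_zero s)

lemma expUnit_zpow (s : ℂ) (n : ℤ) : expUnit s ^ n = expUnit ((n : ℂ) * s) := by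
  ext
  simp [expUnit, Complex.exp_int_mul]

lemma expTensor_eq (s : ℂ) : expTensor s = (Additive.ofMul (expUnit s)) ⊗ₜ[ℤ] (1 : ℚ) := rfl

/-- Key computation: `exp (q·s) ⊗ 1 = exp s ⊗ q`. -/
lemma expTensor_rat_mul (q : ℚ) (s : ℂ) :
    expTensor ((q : ℂ) * s) = (Additive.ofMul (expUnit s)) ⊗ₜ[ℤ] q := by
  have hn0 : ((q.den : ℚ)) ≠ 0 := Nat.cast_ne_zero.mpr q.den_nz
  have h1 : (1 : ℚ) = (q.den : ℤ) • (1 / (q.den : ℚ)) := by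
    rw [zsmul_eq_mul]; push_cast; field_simp
  have h2 : q = q.num • (1 / (q.den : ℚ)) := by
    rw [zsmul_eq_mul, mul_one_div, Rat.num_div_den]
  have hq : ((q.den : ℚ)) * q = (q.num : ℚ) := by
    have h := (Rat.num_div_den q).symm
    rw [eq_div_iff hn0] at h
    rw [mul_comm]; exact h
  have hcast : ((q.den : ℤ) : ℂ) * ((q : ℂ) * s) = ((q.num : ℤ) : ℂ) * s := by
    have h : ((q.den : ℚ) : ℂ) * ((q : ℚ) : ℂ) = ((q.num : ℚ) : ℂ) := by
      rw [← Rat.cast_mul, hq]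
    push_cast at h ⊢
    rw [← mul_assoc, h]
  have chainA : expTensor ((q : ℂ) * s)
      = (Additive.ofMul (expUnit (((q.num : ℤ) : ℂ) * s))) ⊗ₜ[ℤ] (1 / (q.den : ℚ)) := by
    calc expTensor ((q : ℂ) * s)
        = (Additive.ofMul (expUnit ((q : ℂ) * s))) ⊗ₜ[ℤ] ((q.den : ℤ) • (1 / (q.den : ℚ))) := by
          rw [expTensor_eq, ← h1]
      _ = ((q.den : ℤ) • Additive.ofMul (expUnit ((q : ℂ) * s))) ⊗ₜ[ℤ] (1 / (q.den : ℚ)) := by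
          rw [TensorProduct.tmul_smul, TensorProduct.smul_tmul']
      _ = _ := by rw [← ofMul_zpow, expUnit_zpow, hcast]
  have chainB : (Additive.ofMul (expUnit s)) ⊗ₜ[ℤ] q
      = (Additive.ofMul (expUnit (((q.num : ℤ) : ℂ) * s))) ⊗ₜ[ℤ] (1 / (q.den : ℚ)) := by
    calc (Additive.ofMul (expUnit s)) ⊗ₜ[ℤ] q
        = (Additive.ofMul (expUnit s)) ⊗ₜ[ℤ] (q.num • (1 / (q.den : ℚ))) := by rw [← h2]
      _ = (q.num • Additive.ofMul (expUnit s)) ⊗ₜ[ℤ] (1 / (q.den : ℚ)) := by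
          rw [TensorProduct.tmul_smul, TensorProduct.smul_tmul']
      _ = _ := by rw [← ofMul_zpow, expUnit_zpow]
  exact chainA.trans chainB.symm

/-- If `u ⊗ 1 = 0` in `ℂˣ ⊗ ℚ`, then `u` is torsion. -/
lemma torsion_of_tmul_one_eq_zero (u : ℂˣ)
    (h : (Additive.ofMul u) ⊗ₜ[ℤ] (1 : ℚ) = (0 : (Additive ℂˣ) ⊗[ℤ] ℚ)) :
    ∃ n : ℤ, n ≠ 0 ∧ u ^ n = 1 := by
  by_contra hc
  push_neg at hc
  haveI : Module.Flat ℤ ℚ := IsLocalization.flat ℚ (nonZeroDivisors ℤ)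
  set f : ℤ →ₗ[ℤ] Additive ℂˣ := LinearMap.toSpanSingleton ℤ (Additive ℂˣ) (Additive.ofMul u)
  have hf : Function.Injective f := by
    rw [injective_iff_map_eq_zero]
    intro n hn
    by_contra hn0
    apply hc n hn0
    have : Additive.ofMul (u ^ n) = 0 := by
      rw [ofMul_zpow]
      simpa [f, LinearMap.toSpanSingleton_apply] using hn
    exact this
  have hinj := Module.Flat.rTensor_preserves_injective_linearMap (M := ℚ) f hf
  have key : (f.rTensor ℚ) ((1 : ℤ) ⊗ₜ[ℤ] (1 : ℚ)) = (f.rTensor ℚ) 0 := by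
    rw [LinearMap.rTensor_tmul, map_zero]
    simpa [f, LinearMap.toSpanSingleton_apply] using h
  have h00 : (1 : ℤ) ⊗ₜ[ℤ] (1 : ℚ) = (0 : ℤ ⊗[ℤ] ℚ) := hinj key
  have := congrArg (TensorProduct.lid ℤ ℚ) h00
  simp at this

/-- The map `s ↦ exp s ⊗ 1` is an additive group homomorphism `ℂ → ℂˣ ⊗_ℤ ℚ`;
it is surjective, its kernel is exactly `2πi·ℚ`, and consequently it induces an
isomorphism of abelian groups `ℂ/(2πi)ℚ ≅ ℂˣ ⊗_ℤ ℚ`. -/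
theorem expTensor_hom_surjective_ker :
    (∀ s t : ℂ, expTensor (s + t) = expTensor s + expTensor t) ∧
    Function.Surjective expTensor ∧
    (∀ s : ℂ, expTensor s = 0 ↔ ∃ q : ℚ, s = (2 * Real.pi * Complex.I) * (q : ℂ)) ∧
    Nonempty ((ℂ ⧸ twoPiIQ) ≃+ (Additive ℂˣ) ⊗[ℤ] ℚ) := by
  have hzero : expTensor 0 = 0 := by
    rw [expTensor_eq]
    have : expUnit 0 = 1 := by ext; simp [expUnit]
    rw [this, ofMul_one, TensorProduct.zero_tmul]
  have hadd : ∀ s t : ℂ, expTensor (s + t) = expTensor s + expTensor t := by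
    intro s t
    rw [expTensor_eq, expTensor_eq, expTensor_eq, ← TensorProduct.add_tmul]
    congr 1
    rw [← ofMul_mul]
    congr 1
    ext
    simp [expUnit, Complex.exp_add]
  have hsurj : Function.Surjective expTensor := by
    intro x
    induction x using TensorProduct.induction_on with
    | zero => exact ⟨0, hzero⟩
    | tmul u q =>
      obtain ⟨w, hw⟩ : ∃ w, Complex.exp w = (u : ℂˣ).val :=
        ⟨Complex.log _, Complex.exp_log (Units.ne_zero _)⟩
      refine ⟨(q : ℂ) * w, ?_⟩
      rw [expTensor_rat_mul]
      congr 1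
      · change Additive.ofMul (expUnit w) = u
        have h : expUnit w = Additive.toMul u := by
          ext; simp only [expUnit, Units.val_mk0, hw]; rfl
        rw [h]; rfl
    | add x y hx hy =>
      obtain ⟨s, hs⟩ := hx
      obtain ⟨t, ht⟩ := hy
      exact ⟨s + t, by rw [hadd, hs, ht]⟩
  have hker : ∀ s : ℂ, expTensor s = 0 ↔
      ∃ q : ℚ, s = (2 * Real.pi * Complex.I) * (q : ℂ) := by
    intro s
    constructor
    · intro h
      obtain ⟨n, hn0, hn1⟩ := torsion_of_tmul_one_eq_zero (expUnit s) h
      have hv : Complex.exp s ^ n = 1 := by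
        have := congrArg Units.val hn1
        simpa [expUnit] using this
      have : Complex.exp ((n : ℂ) * s) = 1 := by rw [Complex.exp_int_mul]; exact hv
      obtain ⟨k, hk⟩ := Complex.exp_eq_one_iff.mp this
      refine ⟨(k : ℚ) / (n : ℚ), ?_⟩
      have hnC : (n : ℂ) ≠ 0 := Int.cast_ne_zero.mpr hn0
      have hnQ : (n : ℚ) ≠ 0 := Int.cast_ne_zero.mpr hn0
      push_cast
      field_simp
      linear_combination hk
    · rintro ⟨q, rfl⟩
      rw [mul_comm, expTensor_rat_mul]
      have : expUnit (2 * Real.pi * Complex.I) = 1 := by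
        ext; simp [expUnit, Complex.exp_two_pi_mul_I]
      rw [this, ofMul_one, TensorProduct.zero_tmul]
  refine ⟨hadd, hsurj, hker, ?_⟩
  set φ : ℂ →+ (Additive ℂˣ) ⊗[ℤ] ℚ := AddMonoidHom.mk' expTensor hadd
  have hkerφ : twoPiIQ = φ.ker := by
    ext s
    simp only [twoPiIQ, AddMonoidHom.mem_range, AddMonoidHom.mem_ker]
    rw [show φ s = expTensor s from rfl, hker s]
    constructor
    · rintro ⟨q, hq⟩; exact ⟨q, hq.symm⟩
    · rintro ⟨q, hq⟩; exact ⟨q, hq.symm⟩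
  exact ⟨(QuotientAddGroup.quotientAddEquivOfEq hkerφ).trans
    (QuotientAddGroup.quotientKerEquivOfSurjective φ hsurj)⟩
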